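/- Let $(X,q)$ be an affine mobi space over a mobi algebra $(A,p,0,\text{½},1)$ containing an element $2$ with $p(0,\text{½},2)=1$, and fix $e\in X$. Define $x+y=q(e,2,q(x,\text{½},y))$. Then $+$ is associative, commutative, has identity $e$, and every $x$ has inverse $-x=q(e,p(1,2,0),x)$; i.e. $(X,+,e)$ is an abelian group. -/
import Mathlib


structure MobiAlgebra (A : Type*) where
  p : A → A → A → A
  zero : A
  half : A
  one : A
  A1 : p one half zero = half
  A2 : ∀ a, p zero a one = a
  A3 : ∀ a b, p a b a = a
  A4 : ∀ a b, p a zero b = a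
  A5 : ∀ a b, p a one b = b
  A6 : ∀ a b₁ b₂, p a half b₁ = p a half b₂ → b₁ = b₂
  A7 : ∀ a b c₁ c₂ c₃, p a (p c₁ c₂ c₃) b = p (p a c₁ b) c₂ (p a c₃ b)
  A8 : ∀ a₁ a₂ b₁ b₂ c,
    p (p a₁ c b₁) half (p a₂ c b₂) = p (p a₁ half a₂) c (p b₁ half b₂)

structure MobiSpace {A : Type*} (M : MobiAlgebra A) (X : Type*) where
  q : X → A → X → X
  X1 : ∀ x y, q x M.zero y = x
  X2 : ∀ x y, q x M.one y = y
  X3 : ∀ x a, q x a x = x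
  X4 : ∀ x y₁ y₂, q x M.half y₁ = q x M.half y₂ → y₁ = y₂
  X5 : ∀ x y a b c, q (q x a y) b (q x c y) = q x (M.p a b c) y

theorem affine_mobi_to_group {A X : Type*} (M : MobiAlgebra A) (S : MobiSpace M X)
    (affine : ∀ (x₁ x₂ y₁ y₂ : X) (a : A),
      S.q (S.q x₁ a y₁) M.half (S.q x₂ a y₂)
        = S.q (S.q x₁ M.half x₂) a (S.q y₁ M.half y₂))
    (two : A) (h2 : M.p M.zero M.half two = M.one) (e : X) :
    let add : X → X → X := fun x y => S.q e two (S.q x M.half y)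
    (∀ x y z, add (add x y) z = add x (add y z)) ∧
    (∀ x y, add x y = add y x) ∧
    (∀ x, add e x = x) ∧
    (∀ x, add (S.q e (M.p M.one two M.zero) x) x = e) := by
  intro add
  -- commutativity of the midpoint
  have comm : ∀ x y : X, S.q x M.half y = S.q y M.half x := by
    intro x y
    have h := S.X5 x y M.one M.half M.zero
    rw [S.X2, S.X1, M.A1] at h
    exact h.symm
  -- medial law
  have medial : ∀ a b c d : X,
      S.q (S.q a M.half b) M.half (S.q c M.half d)
        = S.q (S.q a M.half c) M.half (S.q b M.half d) := by
    intro a b c d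
    exact affine a c b d M.half
  -- halving a doubling
  have L1 : ∀ w : X, S.q e M.half (S.q e two w) = w := by
    intro w
    have h := S.X5 e w M.zero M.half two
    rw [h2, S.X1, S.X2] at h
    exact h
  have addchar : ∀ x y : X, S.q e M.half (add x y) = S.q x M.half y := by
    intro x y
    exact L1 (S.q x M.half y)
  -- commutativity of half in the algebra
  have halfswap : ∀ a b : A, M.p a M.half b = M.p b M.half a := by
    intro a b
    have h := M.A7 a b M.one M.half M.zero
    rw [M.A1, M.A5, M.A4] at h
    exact h
  -- key algebra identity
  have key : M.p (M.p M.one two M.zero) M.half M.one = M.zero := by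
    have h := M.A7 M.one M.zero two M.half M.zero
    rw [M.A4 M.one M.zero, halfswap two M.zero, h2, M.A5] at h
    exact h.symm
  refine ⟨?_, ?_, ?_, ?_⟩
  · -- associativity
    intro x y z
    apply S.X4 e
    rw [addchar, addchar]
    apply S.X4 e
    calc S.q e M.half (S.q (add x y) M.half z)
        = S.q (S.q e M.half e) M.half (S.q (add x y) M.half z) := by rw [S.X3]
      _ = S.q (S.q e M.half (add x y)) M.half (S.q e M.half z) := medial _ _ _ _
      _ = S.q (S.q x M.half y) M.half (S.q e M.half z) := by rw [addchar]
      _ = S.q (S.q x M.half e) M.half (S.q y M.half z) := medial _ _ _ _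
      _ = S.q (S.q e M.half x) M.half (S.q y M.half z) := by rw [comm x e]
      _ = S.q (S.q e M.half x) M.half (S.q e M.half (add y z)) := by rw [addchar]
      _ = S.q (S.q e M.half e) M.half (S.q x M.half (add y z)) := (medial _ _ _ _).symm
      _ = S.q e M.half (S.q x M.half (add y z)) := by rw [S.X3]
  · -- commutativity
    intro x y
    show S.q e two (S.q x M.half y) = S.q e two (S.q y M.half x)
    rw [comm x y]
  · -- identity
    intro x
    apply S.X4 e
    exact addchar e x
  · -- inverses
    intro x
    apply S.X4 e
    rw [addchar, S.X3]
    have h := S.X5 e x (M.p M.one two M.zero) M.half M.one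
    rw [S.X2, key, S.X1] at h
    exact h
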